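/- Let V be a finite type, G a connected simple graph on V, and w a real-valued weight function on unordered pairs of vertices, and fix a root vertex r. Define U₀ = {r} and A₀ = ∅, and for each step i ≥ 1 with U_{i−1} ≠ V, choose an edge f_i of G with exactly one endpoint in U_{i−1} of minimal weight among such edges, and set A_i = A_{i−1} ∪ {f_i} and U_i = U_{i−1} ∪ {endpoints of f_i}. Then such a choice is possible at every step until U_i = V, this happens after exactly |V| − 1 steps, and the spanning subgraph of G with edge set A_{|V|−1} is a spanning tree of G of minimum total weight (Prim's algorithm produces a minimum spanning tree rooted at r). -/

import Mathlib

open SimpleGraph in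
private lemma prim_reachable_lift {V : Type*} {H K : SimpleGraph V}
    (h : ∀ a b : V, H.Adj a b → K.Reachable a b) {a b : V} (hr : H.Reachable a b) :
    K.Reachable a b := by
  obtain ⟨p⟩ := hr
  induction p with
  | nil => exact Reachable.refl _
  | cons ha _ ih => exact (h _ _ ha).trans ih

open SimpleGraph in
private lemma prim_exists_crossing {V : Type*} {G : SimpleGraph V} (hG : G.Connected)
    {U : Set V} (hne : U.Nonempty) (hnu : U ≠ Set.univ) :
    ∃ x y : V, G.Adj x y ∧ x ∈ U ∧ y ∉ U := by
  obtain ⟨a, ha⟩ := hne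
  obtain ⟨b, hb⟩ : ∃ b : V, b ∉ U := by
    by_contra h
    push_neg at h
    exact hnu (Set.eq_univ_of_forall h)
  obtain ⟨p⟩ := hG a b
  obtain ⟨d, _, hd1, hd2⟩ := p.exists_boundary_dart U ha hb
  exact ⟨d.fst, d.snd, d.adj, hd1, hd2⟩

open SimpleGraph in
private lemma prim_connected_delete_nonbridge {V : Type*} {G : SimpleGraph V}
    (hG : G.Connected) {x y : V}
    (hr : (G \ SimpleGraph.fromEdgeSet {s(x, y)}).Reachable x y) :
    (G \ SimpleGraph.fromEdgeSet {s(x, y)}).Connected := by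
  have hne : Nonempty V := hG.nonempty
  refine ⟨fun a b => ?_⟩
  refine prim_reachable_lift (fun a b hab => ?_) (hG a b)
  by_cases he : s(a, b) = s(x, y)
  · rw [Sym2.eq_iff] at he
    rcases he with ⟨rfl, rfl⟩ | ⟨rfl, rfl⟩
    · exact hr
    · exact hr.symm
  · exact Adj.reachable (by simp [sdiff_adj, hab, fromEdgeSet_adj, he])

open SimpleGraph in
private lemma prim_exists_spanning_tree {V : Type*} [Fintype V] {G : SimpleGraph V}
    (hG : G.Connected) : ∃ T ≤ G, T.IsTree := by
  classical
  generalize hn : G.edgeSet.ncard = n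
  induction n using Nat.strong_induction_on generalizing G with
  | _ n ih =>
  by_cases hac : G.IsAcyclic
  · exact ⟨G, le_refl G, hG, hac⟩
  · rw [IsAcyclic] at hac
    push_neg at hac
    obtain ⟨v, c, hc⟩ := hac
    have hlen : c.edges ≠ [] := by
      have h3 := hc.three_le_length
      intro h
      rw [← SimpleGraph.Walk.length_edges, h] at h3
      simp at h3
    obtain ⟨e, he⟩ := List.exists_mem_of_ne_nil _ hlen
    induction e with
    | _ x y =>
    have hadjr : G.Adj x y ∧ (G \ SimpleGraph.fromEdgeSet {s(x, y)}).Reachable x y :=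
      adj_and_reachable_delete_edges_iff_exists_cycle.mpr ⟨v, c, hc, he⟩
    have hconn' := prim_connected_delete_nonbridge hG hadjr.2
    have hes : (G \ SimpleGraph.fromEdgeSet {s(x, y)}).edgeSet = G.edgeSet \ {s(x, y)} := by
      simp [edgeSet_sdiff, edgeSet_fromEdgeSet, edgeSet_sdiff_sdiff_isDiag]
    have hlt : (G \ SimpleGraph.fromEdgeSet {s(x, y)}).edgeSet.ncard < n := by
      rw [hes, ← hn]
      exact Set.ncard_lt_ncard (by
        constructor
        · exact Set.diff_subset
        · intro hsub
          exact (hsub (c.edges_subset_edgeSet he)).2 rfl) (Set.toFinite _)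
    obtain ⟨T, hT1, hT2⟩ := ih _ hlt hconn' rfl
    exact ⟨T, hT1.trans sdiff_le, hT2⟩

open SimpleGraph in
/-- Exchange lemma: swapping an edge `s(x,y)` of a tree `T` for a non-edge `s(u,v)`,
where `s(x,y)` lies on every `T`-walk from `u` to `v`, yields a tree. -/
private lemma prim_exchange_isTree {V : Type*} {T : SimpleGraph V} (hT : T.IsTree)
    {x y u v : V} (hxy : T.Adj x y) (huv : u ≠ v) (he : s(u, v) ∉ T.edgeSet)
    (hpath : ∀ p : T.Walk u v, s(x, y) ∈ p.edges) :
    (SimpleGraph.fromEdgeSet ((T.edgeSet \ {s(x, y)}) ∪ {s(u, v)})).IsTree := by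
  classical
  set e : Sym2 V := s(u, v) with he_def
  set e' : Sym2 V := s(x, y) with he'_def
  set T' : SimpleGraph V := SimpleGraph.fromEdgeSet ((T.edgeSet \ {e'}) ∪ {e}) with hT'_def
  have hee' : e ≠ e' := fun h => he (h ▸ (T.mem_edgeSet.mpr hxy))
  set Tp : SimpleGraph V := T ⊔ SimpleGraph.fromEdgeSet {e} with hTp_def
  have hTle : T ≤ Tp := le_sup_left
  obtain ⟨q⟩ := hT.isConnected u v
  set q' : Tp.Walk u v := (q.toPath : T.Walk u v).transfer Tp
    (fun f hf => edgeSet_mono hTle ((q.toPath : T.Walk u v).edges_subset_edgeSet hf))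
    with hq'_def
  have hq'path : q'.IsPath := (q.toPath.2).transfer _
  have hq'edges : q'.edges = (q.toPath : T.Walk u v).edges := Walk.edges_transfer _ _
  have hadjvu : Tp.Adj v u := by
    rw [hTp_def, sup_adj, fromEdgeSet_adj]
    refine Or.inr ⟨?_, huv.symm⟩
    rw [Sym2.eq_swap, he_def]
    rfl
  have hc : (Walk.cons hadjvu q').IsCycle := by
    apply Path.cons_isCycle ⟨q', hq'path⟩
    rw [Sym2.eq_swap]
    intro hmem
    rw [hq'edges] at hmem
    exact he ((q.toPath : T.Walk u v).edges_subset_edgeSet hmem)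
  have he'c : e' ∈ (Walk.cons hadjvu q').edges := by
    rw [Walk.edges_cons, hq'edges]
    exact List.mem_cons_of_mem _ (hpath _)
  have hreach : (Tp \ SimpleGraph.fromEdgeSet {e'}).Reachable x y :=
    (adj_and_reachable_delete_edges_iff_exists_cycle.mpr ⟨v, _, hc, he'c⟩).2
  have hle1 : Tp \ SimpleGraph.fromEdgeSet {e'} ≤ T' := by
    intro a b hab
    rw [sdiff_adj, fromEdgeSet_adj] at hab
    obtain ⟨hab1, hab2⟩ := hab
    have hne : a ≠ b := hab1.ne
    have hne' : s(a, b) ≠ e' := fun h => hab2 ⟨h, hne⟩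
    rw [hT'_def, fromEdgeSet_adj]
    refine ⟨?_, hne⟩
    rcases (sup_adj _ _ _ _).mp hab1 with h | h
    · exact Or.inl ⟨(T.mem_edgeSet.mpr h), hne'⟩
    · rw [fromEdgeSet_adj] at h
      exact Or.inr h.1
  have hxyT' : T'.Reachable x y := hreach.mono hle1
  have hconn : T'.Connected := by
    have hne : Nonempty V := hT.isConnected.nonempty
    refine ⟨fun a b => ?_⟩
    refine prim_reachable_lift (fun a b hab => ?_) (hT.isConnected a b)
    by_cases hf : s(a, b) = e'
    · rw [he'_def, Sym2.eq_iff] at hf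
      rcases hf with ⟨rfl, rfl⟩ | ⟨rfl, rfl⟩
      · exact hxyT'
      · exact hxyT'.symm
    · refine Adj.reachable ?_
      rw [hT'_def, fromEdgeSet_adj]
      exact ⟨Or.inl ⟨(T.mem_edgeSet.mpr hab), hf⟩, hab.ne⟩
  have hacyc : T'.IsAcyclic := by
    intro a c hc2
    by_cases hec : e ∈ c.edges
    · have h2 : (T' \ SimpleGraph.fromEdgeSet {e}).Reachable u v :=
        (adj_and_reachable_delete_edges_iff_exists_cycle.mpr
          ⟨a, c, hc2, by rwa [he_def] at hec⟩).2
      obtain ⟨W⟩ := h2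
      have hWT : ∀ f ∈ W.edges, f ∈ T.edgeSet := by
        intro f hf
        have h3 := W.edges_subset_edgeSet hf
        rw [edgeSet_sdiff, edgeSet_fromEdgeSet] at h3
        obtain ⟨⟨h4, hdiag⟩, h5⟩ := h3
        simp only [edgeSet_fromEdgeSet] at h5
        rcases h4 with h | h
        · exact h.1
        · exact absurd ⟨h, hdiag⟩ h5
      have hWe' : e' ∉ W.edges := by
        intro hf
        have h3 := W.edges_subset_edgeSet hf
        rw [edgeSet_sdiff, edgeSet_fromEdgeSet] at h3
        rcases h3.1.1 with h | h
        · exact h.2 rfl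
        · exact hee' (by simpa using h.symm)
      exact hWe' (by
        have := hpath (W.transfer T hWT)
        rwa [Walk.edges_transfer] at this)
    · have hcT : ∀ f ∈ c.edges, f ∈ T.edgeSet := by
        intro f hf
        have h3 := c.edges_subset_edgeSet hf
        rw [hT'_def, edgeSet_fromEdgeSet] at h3
        rcases h3.1 with h | h
        · exact h.1
        · exact absurd (h ▸ hf) hec
      exact hT.IsAcyclic (c.transfer T hcT) (hc2.transfer hcT)
  exact ⟨hconn, hacyc⟩

/-- The total weight of a simple graph on a finite vertex type: the sum of the
weights of its edges. -/
noncomputable def totalWeight {V : Type*} [Fintype V] (w : Sym2 V → ℝ)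
    (H : SimpleGraph V) : ℝ :=
  ∑ e ∈ (Set.toFinite H.edgeSet).toFinset, w e

/-- `T` is a minimum spanning tree of `G` for the weight function `w`. -/
def IsMST {V : Type*} [Fintype V] (G : SimpleGraph V) (w : Sym2 V → ℝ)
    (T : SimpleGraph V) : Prop :=
  T ≤ G ∧ T.IsTree ∧
    ∀ T' : SimpleGraph V, T' ≤ G → T'.IsTree → totalWeight w T ≤ totalWeight w T'

open SimpleGraph in
private lemma prim_exists_MST {V : Type*} [Fintype V] {G : SimpleGraph V}
    (hG : G.Connected) (w : Sym2 V → ℝ) : ∃ T, IsMST G w T := by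
  classical
  have hfin : Finite (SimpleGraph V) :=
    Finite.of_injective (fun H => H.Adj) (fun a b h => SimpleGraph.ext h)
  have hSfin : {T : SimpleGraph V | T ≤ G ∧ T.IsTree}.Finite := Set.toFinite _
  obtain ⟨T0, hT0le, hT0⟩ := prim_exists_spanning_tree hG
  obtain ⟨T, hTmem, hTmin⟩ := Set.exists_min_image _ (totalWeight w) hSfin ⟨T0, hT0le, hT0⟩
  exact ⟨T, hTmem.1, hTmem.2, fun T' h1 h2 => hTmin T' ⟨h1, h2⟩⟩

open SimpleGraph in
private lemma prim_totalWeight_exchange {V : Type*} [Fintype V] (w : Sym2 V → ℝ)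
    {T : SimpleGraph V} {e e' : Sym2 V} (he' : e' ∈ T.edgeSet) (he : e ∉ T.edgeSet)
    (hd : ¬ e.IsDiag) (hwe : w e ≤ w e') :
    totalWeight w (SimpleGraph.fromEdgeSet ((T.edgeSet \ {e'}) ∪ {e}))
      ≤ totalWeight w T := by
  classical
  have hes : (SimpleGraph.fromEdgeSet ((T.edgeSet \ {e'}) ∪ {e})).edgeSet
      = (T.edgeSet \ {e'}) ∪ {e} := by
    rw [edgeSet_fromEdgeSet]
    ext f
    constructor
    · exact fun h => h.1
    · intro hf1
      refine ⟨hf1, ?_⟩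
      rcases hf1 with h | h
      · exact (T.not_isDiag_of_mem_edgeSet h.1)
      · rw [Set.mem_singleton_iff] at h
        exact h ▸ hd
  set F : Finset (Sym2 V) := (Set.toFinite T.edgeSet).toFinset with hF
  have heF : e' ∈ F := by rw [hF, Set.Finite.mem_toFinset]; exact he'
  have heF2 : e ∉ F := by rw [hF, Set.Finite.mem_toFinset]; exact he
  have hF2 : (Set.toFinite
      (SimpleGraph.fromEdgeSet ((T.edgeSet \ {e'}) ∪ {e})).edgeSet).toFinset
      = insert e (F.erase e') := by
    ext f
    rw [Set.Finite.mem_toFinset, hes]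
    simp only [Finset.mem_insert, Finset.mem_erase, hF, Set.Finite.mem_toFinset,
      Set.mem_union, Set.mem_diff, Set.mem_singleton_iff, ne_eq]
    tauto
  rw [totalWeight, totalWeight, hF2,
    Finset.sum_insert (fun h => heF2 (Finset.erase_subset _ _ h)),
    ← Finset.add_sum_erase _ w heF]
  linarith

/-- Prim's algorithm produces a minimum spanning tree rooted at `r`.  First, at
any stage where the current vertex set `U` is nonempty and not all of `V`,
there exists an edge of `G` with exactly one endpoint in `U` of minimal weight
among such edges, so the greedy choice is always possible.  Second, for any run
of the algorithm — sequences `U i` of vertex sets and `A i` of edge sets with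
`U 0 = {r}`, `A 0 = ∅`, where at each step `i < |V| - 1` a minimal-weight edge
`s(u,v)` of `G` with exactly one endpoint in `U i` is chosen and
`U (i+1) = U i ∪ {u, v}`, `A (i+1) = A i ∪ {s(u,v)}` — the vertex set is not
yet full before step `|V| - 1`, it is full after exactly `|V| - 1` steps, and
the spanning subgraph with edge set `A (|V| - 1)` is a minimum spanning tree of
`G`. -/
theorem prim_minimum_spanning_tree {V : Type*} [Fintype V]
    (G : SimpleGraph V) (hG : G.Connected) (w : Sym2 V → ℝ) (r : V) :
    (∀ U : Set V, U.Nonempty → U ≠ Set.univ →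
      ∃ u v : V, G.Adj u v ∧ Xor' (u ∈ U) (v ∈ U) ∧
        ∀ x y : V, G.Adj x y → Xor' (x ∈ U) (y ∈ U) → w s(u, v) ≤ w s(x, y)) ∧
    (∀ (U : ℕ → Set V) (A : ℕ → Set (Sym2 V)),
      U 0 = {r} → A 0 = ∅ →
      (∀ i < Fintype.card V - 1, ∃ u v : V, G.Adj u v ∧ Xor' (u ∈ U i) (v ∈ U i) ∧
        (∀ x y : V, G.Adj x y → Xor' (x ∈ U i) (y ∈ U i) → w s(u, v) ≤ w s(x, y)) ∧
        U (i + 1) = U i ∪ {u, v} ∧ A (i + 1) = A i ∪ {s(u, v)}) →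
      (∀ i < Fintype.card V - 1, U i ≠ Set.univ) ∧
      U (Fintype.card V - 1) = Set.univ ∧
      IsMST G w (SimpleGraph.fromEdgeSet (A (Fintype.card V - 1)))) := by
  classical
  constructor
  · -- Part 1: existence of a minimal crossing edge
    intro U hne hnu
    obtain ⟨x0, y0, hadj0, hx0, hy0⟩ := prim_exists_crossing hG hne hnu
    set F : Finset (V × V) :=
      Finset.univ.filter (fun p => G.Adj p.1 p.2 ∧ p.1 ∈ U ∧ p.2 ∉ U) with hF
    have hFne : F.Nonempty := ⟨(x0, y0), by simp [hF, hadj0, hx0, hy0]⟩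
    obtain ⟨p, hp, hpmin⟩ := Finset.exists_min_image F (fun p => w s(p.1, p.2)) hFne
    rw [hF, Finset.mem_filter] at hp
    refine ⟨p.1, p.2, hp.2.1, Or.inl ⟨hp.2.2.1, hp.2.2.2⟩, ?_⟩
    intro a b hab hx
    rcases hx with ⟨ha, hb⟩ | ⟨hb, ha⟩
    · exact hpmin (a, b) (by simp [hF, hab, ha, hb])
    · have h := hpmin (b, a) (by simp [hF, hab.symm, hb, ha])
      exact h.trans_eq (congrArg w Sym2.eq_swap)
  · -- Part 2: correctness of a run of Prim's algorithm
    intro U A hU0 hA0 hstep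
    have hneV : Nonempty V := hG.nonempty
    set n := Fintype.card V with hn
    have hn1 : 1 ≤ n := Fintype.card_pos
    have key : ∀ i, i ≤ n - 1 →
        (U i).ncard = i + 1 ∧
        (∀ x y : V, s(x, y) ∈ A i → x ∈ U i ∧ y ∈ U i) ∧
        (A i).ncard = i ∧
        ∃ T, IsMST G w T ∧ A i ⊆ T.edgeSet := by
      intro i
      induction i with
      | zero =>
        intro _
        refine ⟨by rw [hU0]; exact Set.ncard_singleton r, ?_, by rw [hA0]; simp, ?_⟩
        · intro x y hxy
          rw [hA0] at hxy
          exact absurd hxy (Set.notMem_empty _)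
        · obtain ⟨T, hT⟩ := prim_exists_MST hG w
          exact ⟨T, hT, by rw [hA0]; exact Set.empty_subset _⟩
      | succ i ih =>
        intro hle
        have hi : i < n - 1 := Nat.lt_of_succ_le hle
        obtain ⟨hcardU, hend, hcardA, T, hT, hsub⟩ := ih (le_of_lt hi)
        obtain ⟨u, v, hadj, hxor, hmin, hUeq, hAeq⟩ := hstep i hi
        obtain ⟨u', v', hadj', hu', hv', hsEq, hPairEq⟩ :
            ∃ u' v', G.Adj u' v' ∧ u' ∈ U i ∧ v' ∉ U i ∧ s(u', v') = s(u, v) ∧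
              ({u, v} : Set V) = {u', v'} := by
          rcases hxor with ⟨h1, h2⟩ | ⟨h2, h1⟩
          · exact ⟨u, v, hadj, h1, h2, rfl, rfl⟩
          · exact ⟨v, u, hadj.symm, h2, h1, Sym2.eq_swap, Set.pair_comm u v⟩
        have hU1 : U (i + 1) = insert v' (U i) := by
          rw [hUeq, hPairEq]
          ext a
          simp only [Set.mem_union, Set.mem_insert_iff, Set.mem_singleton_iff]
          constructor
          · rintro (h | rfl | rfl)
            exacts [Or.inr h, Or.inr hu', Or.inl rfl]
          · rintro (rfl | h)
            exacts [Or.inr (Or.inr rfl), Or.inl h]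
        have hA1 : A (i + 1) = insert s(u', v') (A i) := by
          rw [hAeq, ← hsEq, Set.union_singleton]
        have heA : s(u', v') ∉ A i := fun h => hv' (hend u' v' h).2
        refine ⟨?_, ?_, ?_, ?_⟩
        · rw [hU1, Set.ncard_insert_of_notMem hv' (Set.toFinite _), hcardU]
        · intro x y hxy
          rw [hA1, Set.mem_insert_iff] at hxy
          rcases hxy with h | h
          · rw [Sym2.eq_iff] at h
            rw [hU1]
            rcases h with ⟨rfl, rfl⟩ | ⟨rfl, rfl⟩
            · exact ⟨Set.mem_insert_of_mem _ hu', Set.mem_insert _ _⟩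
            · exact ⟨Set.mem_insert _ _, Set.mem_insert_of_mem _ hu'⟩
          · obtain ⟨h1, h2⟩ := hend x y h
            rw [hU1]
            exact ⟨Set.mem_insert_of_mem _ h1, Set.mem_insert_of_mem _ h2⟩
        · rw [hA1, Set.ncard_insert_of_notMem heA (Set.toFinite _), hcardA]
        · obtain ⟨hTle, hTtree, hTmin⟩ := hT
          by_cases hmem : s(u', v') ∈ T.edgeSet
          · exact ⟨T, ⟨hTle, hTtree, hTmin⟩, by
              rw [hA1]; exact Set.insert_subset hmem hsub⟩
          · -- exchange step
            obtain ⟨q, hq, huniq⟩ := hTtree.existsUnique_path u' v'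
            obtain ⟨d, hd, hdx, hdy⟩ := q.exists_boundary_dart (U i) hu' hv'
            have hdadj : T.Adj d.fst d.snd := d.adj
            have he'T : s(d.fst, d.snd) ∈ T.edgeSet := T.mem_edgeSet.mpr hdadj
            have he'q : s(d.fst, d.snd) ∈ q.edges := by
              exact List.mem_map_of_mem hd
            have hpathall : ∀ p : T.Walk u' v', s(d.fst, d.snd) ∈ p.edges := by
              intro p
              have h1 : (p.toPath : T.Walk u' v') = q :=
                huniq (p.toPath : T.Walk u' v') p.toPath.2
              have h2 : s(d.fst, d.snd) ∈ (p.toPath : T.Walk u' v').edges := by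
                rw [h1]; exact he'q
              exact SimpleGraph.Walk.edges_toPath_subset p h2
            have hwle : w s(u', v') ≤ w s(d.fst, d.snd) := by
              rw [hsEq]
              exact hmin d.fst d.snd (hTle hdadj) (Or.inl ⟨hdx, hdy⟩)
            set T2 : SimpleGraph V :=
              SimpleGraph.fromEdgeSet ((T.edgeSet \ {s(d.fst, d.snd)}) ∪ {s(u', v')})
              with hT2
            have hT2tree : T2.IsTree :=
              prim_exchange_isTree hTtree hdadj hadj'.ne hmem hpathall
            have hT2le : T2 ≤ G := by
              intro a b hab
              rw [hT2, SimpleGraph.fromEdgeSet_adj] at hab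
              rcases hab.1 with h | h
              · exact G.mem_edgeSet.mp (SimpleGraph.edgeSet_mono hTle h.1)
              · rw [Set.mem_singleton_iff, Sym2.eq_iff] at h
                rcases h with ⟨rfl, rfl⟩ | ⟨rfl, rfl⟩
                · exact hadj'
                · exact hadj'.symm
            have hT2w : totalWeight w T2 ≤ totalWeight w T :=
              prim_totalWeight_exchange w he'T hmem
                (by rw [Sym2.mk_isDiag_iff]; exact hadj'.ne) hwle
            refine ⟨T2, ⟨hT2le, hT2tree, fun T'' h1 h2 =>
              le_trans hT2w (hTmin T'' h1 h2)⟩, ?_⟩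
            rw [hA1]
            apply Set.insert_subset
            · rw [SimpleGraph.mem_edgeSet, hT2, SimpleGraph.fromEdgeSet_adj]
              exact ⟨Or.inr rfl, hadj'.ne⟩
            · intro f hf
              have hfT : f ∈ T.edgeSet := hsub hf
              have hfne : f ≠ s(d.fst, d.snd) := by
                rintro rfl
                exact hdy (hend d.fst d.snd hf).2
              rw [hT2, SimpleGraph.edgeSet_fromEdgeSet]
              exact ⟨Or.inl ⟨hfT, hfne⟩, T.not_isDiag_of_mem_edgeSet hfT⟩
    have hUne : ∀ i < n - 1, U i ≠ Set.univ := by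
      intro i hi hequniv
      have h1 := (key i (le_of_lt hi)).1
      rw [hequniv, Set.ncard_univ, Nat.card_eq_fintype_card, ← hn] at h1
      omega
    obtain ⟨hcardU, _, hcardA, T, hT, hsub⟩ := key (n - 1) (le_refl _)
    have hUuniv : U (n - 1) = Set.univ := by
      apply Set.eq_of_subset_of_ncard_le (Set.subset_univ _) _ (Set.toFinite _)
      rw [Set.ncard_univ, Nat.card_eq_fintype_card, ← hn, hcardU]
      omega
    refine ⟨hUne, hUuniv, ?_⟩
    haveI : Fintype T.edgeSet := (Set.toFinite _).fintype
    have hTcard : T.edgeSet.ncard = n - 1 := by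
      have h1 := hT.2.1.card_edgeFinset
      have h2 : T.edgeSet.ncard = T.edgeFinset.card := Set.ncard_eq_toFinset_card' _
      rw [← hn] at h1
      omega
    have hAeq : A (n - 1) = T.edgeSet :=
      Set.eq_of_subset_of_ncard_le hsub (by rw [hTcard, hcardA]) (Set.toFinite _)
    rw [hAeq, SimpleGraph.fromEdgeSet_edgeSet]
    exact hT
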